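/- Let (δ_n) ⊆ [0,1], ρ ∈ [0,1), and suppose ∑ δ_n diverges with rate of divergence σ₁. Define σ₁⁺(n) = max{σ₁(i) : 0 ≤ i ≤ n} and θ(n) = max(σ₁⁺(⌈n/(1−ρ)⌉ + 1) − 1, 0). Then ∑_{i=0}^{θ(n)} (1−ρ)δ_{i+1} ≥ n for all n, i.e., θ is a rate of divergence of ∑_n (1−ρ)δ_{n+1}. -/

import Mathlib

theorem stmt_16 (δ : ℕ → ℝ) (hδ : ∀ n, δ n ∈ Set.Icc (0:ℝ) 1)
    (ρ : ℝ) (hρ : 0 ≤ ρ) (hρ1 : ρ < 1)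
    (σ₁ : ℕ → ℕ) (hσ₁ : ∀ n : ℕ, (n : ℝ) ≤ ∑ i ∈ Finset.range (σ₁ n + 1), δ i) :
    ∀ n : ℕ,
      (n : ℝ) ≤ ∑ i ∈ Finset.range
        (((Finset.range (⌈(n : ℝ) / (1 - ρ)⌉₊ + 1 + 1)).sup σ₁ - 1) + 1),
        (1 - ρ) * δ (i + 1) := by
  intro n
  have h1ρ : (0:ℝ) < 1 - ρ := by linarith
  set m : ℕ := ⌈(n : ℝ) / (1 - ρ)⌉₊ + 1 with hm
  set S : ℕ := (Finset.range (m + 1)).sup σ₁ with hSdef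
  have hS : σ₁ m ≤ S := Finset.le_sup (Finset.mem_range.mpr (Nat.lt_succ_self m))
  have hsub : σ₁ m + 1 ≤ (S - 1) + 2 := by omega
  -- monotone sum
  have hsum1 : ∑ i ∈ Finset.range (σ₁ m + 1), δ i ≤ ∑ i ∈ Finset.range ((S - 1) + 2), δ i := by
    apply Finset.sum_le_sum_of_subset_of_nonneg
    · exact Finset.range_subset_range.mpr hsub
    · intro i _ _; exact (hδ i).1
  have hshift : ∑ i ∈ Finset.range ((S - 1) + 2), δ i
      = ∑ i ∈ Finset.range ((S - 1) + 1), δ (i + 1) + δ 0 :=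
    Finset.sum_range_succ' δ _
  have hm' : (m : ℝ) ≤ ∑ i ∈ Finset.range ((S - 1) + 2), δ i := le_trans (hσ₁ m) hsum1
  have hδ0 : δ 0 ≤ 1 := (hδ 0).2
  have hceil : (n : ℝ) / (1 - ρ) ≤ (⌈(n : ℝ) / (1 - ρ)⌉₊ : ℝ) :=
    Nat.le_ceil _
  have hmr : ((⌈(n : ℝ) / (1 - ρ)⌉₊ : ℕ) : ℝ) + 1 = (m : ℝ) := by
    rw [hm]; push_cast; ring
  have key : (n : ℝ) / (1 - ρ) ≤ ∑ i ∈ Finset.range ((S - 1) + 1), δ (i + 1) := by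
    have : (m : ℝ) - 1 ≤ ∑ i ∈ Finset.range ((S - 1) + 1), δ (i + 1) := by
      rw [hshift] at hm'; linarith
    calc (n : ℝ) / (1 - ρ) ≤ (⌈(n : ℝ) / (1 - ρ)⌉₊ : ℝ) := hceil
      _ = (m : ℝ) - 1 := by linarith [hmr]
      _ ≤ _ := this
  calc (n : ℝ) = (1 - ρ) * ((n : ℝ) / (1 - ρ)) := by field_simp
    _ ≤ (1 - ρ) * ∑ i ∈ Finset.range ((S - 1) + 1), δ (i + 1) := by
        exact mul_le_mul_of_nonneg_left key (le_of_lt h1ρ)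
    _ = ∑ i ∈ Finset.range ((S - 1) + 1), (1 - ρ) * δ (i + 1) := Finset.mul_sum _ _ _
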